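/- Let G be a positive linearly ordered cancellative monoid with identity \mu and R a ring. If e = e_0 g_0 + e_1 g_1 + ... + e_m g_m is an idempotent of the monoid ring R[G] with g_0 < g_1 < ... < g_m, then g_0 = \mu and e_0 is an idempotent of R. -/

import Mathlib

theorem monoidAlgebra_idempotent_constant_term
    {R : Type*} [Ring R] {G : Type*} [Monoid G] [LinearOrder G]
    [CovariantClass G G (· * ·) (· < ·)]
    [CovariantClass G G (Function.swap (· * ·)) (· < ·)]
    [IsCancelMul G]
    (hpos : ∀ s : G, 1 ≤ s)
    (m : ℕ) (g : Fin (m + 1) → G) (hg : StrictMono g)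
    (c : Fin (m + 1) → R) (hc : ∀ i, c i ≠ 0)
    (e : MonoidAlgebra R G)
    (hrep : e = ∑ i, MonoidAlgebra.single (g i) (c i))
    (he : e * e = e) :
    g 0 = 1 ∧ c 0 * c 0 = c 0 := by
  haveI : CovariantClass G G (· * ·) (· ≤ ·) := covariantClass_le_of_lt _ _ _
  haveI : CovariantClass G G (Function.swap (· * ·)) (· ≤ ·) := covariantClass_le_of_lt _ _ _
  have hginj := hg.injective
  have key : ∀ x : G, (∑ i, ∑ j, if g i * g j = x then c i * c j else 0)
      = ∑ i, if g i = x then c i else 0 := by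
    intro x
    have h1 : e.coeff x = ∑ i, if g i = x then c i else 0 := by
      rw [hrep, MonoidAlgebra.coeff_sum, Finset.sum_apply']
      simp [MonoidAlgebra.coeff_single, Finsupp.single_apply]
    have h2 : (e * e).coeff x = ∑ i, ∑ j, if g i * g j = x then c i * c j else 0 := by
      conv_lhs => rw [hrep]
      rw [Finset.sum_mul_sum]
      simp only [MonoidAlgebra.single_mul_single]
      rw [MonoidAlgebra.coeff_sum, Finset.sum_apply']
      refine Finset.sum_congr rfl fun i _ => ?_
      rw [MonoidAlgebra.coeff_sum, Finset.sum_apply']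
      exact Finset.sum_congr rfl fun j _ => Finsupp.single_apply
    rw [← h1, ← h2, he]
  have hg0 : g 0 = 1 := by
    by_contra h0
    have hk := key (g 0)
    have hne : ∀ i j : Fin (m + 1), g i * g j ≠ g 0 := by
      intro i j hEq
      have h1 : g i ≤ g i * g j := le_mul_of_one_le_right' (hpos _)
      have h2 : g 0 ≤ g i := hg.monotone (Fin.zero_le i)
      have hgi : g i = g 0 := le_antisymm (hEq ▸ h1) h2
      have hgj : g j = 1 := by
        apply mul_left_cancel (a := g i)
        rw [hEq, mul_one, hgi]
      have : g 0 ≤ g j := hg.monotone (Fin.zero_le j)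
      exact h0 (le_antisymm (hgj ▸ this) (hgj ▸ hpos (g 0)))
    rw [Finset.sum_eq_zero (fun i _ => Finset.sum_eq_zero (fun j _ => by
      simp [hne i j]))] at hk
    have : ∑ i, (if g i = g 0 then c i else 0) = c 0 := by
      simp [hginj.eq_iff]
    rw [this] at hk
    exact hc 0 hk.symm
  refine ⟨hg0, ?_⟩
  have hk := key 1
  have hiff : ∀ i j : Fin (m + 1), g i * g j = 1 ↔ i = 0 ∧ j = 0 := by
    intro i j
    constructor
    · intro hEq
      have h1 : g i ≤ g i * g j := le_mul_of_one_le_right' (hpos _)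
      have hgi : g i = 1 := le_antisymm (hEq ▸ h1) (hpos _)
      have hgj : g j = 1 := by
        apply mul_left_cancel (a := g i); rw [hEq, mul_one, hgi]
      exact ⟨hginj (hgi.trans hg0.symm), hginj (hgj.trans hg0.symm)⟩
    · rintro ⟨rfl, rfl⟩; rw [hg0, mul_one]
  have hR : ∑ i, (if g i = 1 then c i else 0) = c 0 := by
    have : ∀ i : Fin (m+1), (g i = 1) ↔ i = 0 := fun i =>
      ⟨fun h => hginj (h.trans hg0.symm), fun h => h ▸ hg0⟩
    simp [this]
  have hL : (∑ i, ∑ j, if g i * g j = 1 then c i * c j else 0) = c 0 * c 0 := by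
    simp only [hiff, ite_and]
    simp [Finset.sum_ite_eq', Finset.sum_ite_eq]
  rw [hR, hL] at hk
  exact hk
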